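/- Let W1 and W2 be B-DMCs with finite output alphabets Y1 and Y2 satisfying W_i(y|0)+W_i(y|1) > 0 for every output y, and let ρ ≥ 0. Assume |Δ_{W1}(y1)·Δ_{W2}(y2)| < 1 for all y1, y2. Then exp(−E0(ρ, W⁺)) = Σ_{y1∈Y1} Σ_{y2∈Y2} q_{W1}(y1) q_{W2}(y2) · h(ρ, |Δ_{W1}(y1)|, |Δ_{W2}(y2)|), where W⁺ is the plus polar transform of W1 and W2. -/

import Mathlib

open Real

/-- Gallager's `g` function: `g ρ z = ((1/2)(1+z)^{1/(1+ρ)} + (1/2)(1-z)^{1/(1+ρ)})^{1+ρ}`. -/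
noncomputable def g (ρ z : ℝ) : ℝ :=
  ((1/2) * (1 + z) ^ (1/(1+ρ)) + (1/2) * (1 - z) ^ (1/(1+ρ))) ^ (1+ρ)

/-- Gallager's `E0` of a binary-input channel `W` (input `false` is 0, `true` is 1)
under the uniform input distribution. -/
noncomputable def E0 {Y : Type*} [Fintype Y] (ρ : ℝ) (W : Bool → Y → ℝ) : ℝ :=
  - Real.log (∑ y, ((1/2) * (W false y) ^ (1/(1+ρ)) + (1/2) * (W true y) ^ (1/(1+ρ))) ^ (1+ρ))

/-- `q_W(y) = (W(y|0)+W(y|1))/2`. -/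
noncomputable def qW {Y : Type*} (W : Bool → Y → ℝ) (y : Y) : ℝ :=
  (W false y + W true y) / 2

/-- `Δ_W(y) = (W(y|0) - W(y|1))/(W(y|0)+W(y|1))`. -/
noncomputable def ΔW {Y : Type*} (W : Bool → Y → ℝ) (y : Y) : ℝ :=
  (W false y - W true y) / (W false y + W true y)

/-- The minus polar transform of two channels. -/
noncomputable def Wminus {Y1 Y2 : Type*} (W1 : Bool → Y1 → ℝ) (W2 : Bool → Y2 → ℝ) :
    Bool → Y1 × Y2 → ℝ :=
  fun u1 y => ∑ u2 : Bool, (1/2) * W1 (xor u1 u2) y.1 * W2 u2 y.2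

/-- The plus polar transform of two channels; output is `(y1, y2, u1)`. -/
noncomputable def Wplus {Y1 Y2 : Type*} (W1 : Bool → Y1 → ℝ) (W2 : Bool → Y2 → ℝ) :
    Bool → Y1 × Y2 × Bool → ℝ :=
  fun u2 y => (1/2) * W1 (xor y.2.2 u2) y.1 * W2 u2 y.2.1

/-- The function `h(ρ, z1, z2)` from the `W⁺` representation. -/
noncomputable def hfun (ρ z1 z2 : ℝ) : ℝ :=
  (1/2) * (1 + z1*z2) * g ρ ((z1 + z2)/(1 + z1*z2))
    + (1/2) * (1 - z1*z2) * g ρ ((z1 - z2)/(1 - z1*z2))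

/-! ### Auxiliary lemmas -/

lemma g_neg (ρ z : ℝ) : g ρ (-z) = g ρ z := by
  unfold g
  rw [show (1 : ℝ) + -z = 1 - z by ring, show (1 : ℝ) - -z = 1 + z by ring, add_comm]

lemma g_pos {ρ : ℝ} (hρ : 0 ≤ ρ) {z : ℝ} (hz : |z| ≤ 1) : 0 < g ρ z := by
  have h1 : (0:ℝ) < 1 + ρ := by linarith
  obtain ⟨hz1, hz2⟩ := abs_le.mp hz
  apply Real.rpow_pos_of_pos
  rcases le_or_gt z 0 with h | h
  · have a1 : 0 < (1-z) ^ (1/(1+ρ)) := Real.rpow_pos_of_pos (by linarith) _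
    have a2 : 0 ≤ (1+z) ^ (1/(1+ρ)) := Real.rpow_nonneg (by linarith) _
    linarith
  · have a1 : 0 < (1+z) ^ (1/(1+ρ)) := Real.rpow_pos_of_pos (by linarith) _
    have a2 : 0 ≤ (1-z) ^ (1/(1+ρ)) := Real.rpow_nonneg (by linarith) _
    linarith

lemma term_eq {ρ : ℝ} (hρ : 0 ≤ ρ) {K z : ℝ} (hK : 0 ≤ K) (h1 : 0 ≤ 1 + z) (h2 : 0 ≤ 1 - z) :
    ((1/2) * (K * (1 + z)) ^ (1/(1+ρ)) + (1/2) * (K * (1 - z)) ^ (1/(1+ρ))) ^ (1+ρ)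
      = K * g ρ z := by
  have hρ1 : (0:ℝ) < 1 + ρ := by linarith
  have e1 : 0 ≤ (1/2) * (1+z) ^ (1/(1+ρ)) + (1/2) * (1-z) ^ (1/(1+ρ)) := by
    have := Real.rpow_nonneg h1 (1/(1+ρ))
    have := Real.rpow_nonneg h2 (1/(1+ρ))
    linarith
  rw [Real.mul_rpow hK h1, Real.mul_rpow hK h2,
      show (1/2) * (K ^ (1/(1+ρ)) * (1+z) ^ (1/(1+ρ))) + (1/2) * (K ^ (1/(1+ρ)) * (1-z) ^ (1/(1+ρ)))
        = K ^ (1/(1+ρ)) * ((1/2) * (1+z) ^ (1/(1+ρ)) + (1/2) * (1-z) ^ (1/(1+ρ))) by ring,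
      Real.mul_rpow (Real.rpow_nonneg hK _) e1,
      ← Real.rpow_mul hK, one_div_mul_cancel (ne_of_gt hρ1), Real.rpow_one]
  rfl

lemma hfun_neg_left (ρ z1 z2 : ℝ) : hfun ρ (-z1) z2 = hfun ρ z1 z2 := by
  unfold hfun
  rw [show -z1*z2 = -(z1*z2) by ring, show (1:ℝ) + -(z1*z2) = 1 - z1*z2 by ring,
      show (1:ℝ) - -(z1*z2) = 1 + z1*z2 by ring,
      show (-z1 + z2)/(1 - z1*z2) = -((z1 - z2)/(1 - z1*z2)) by ring,
      show (-z1 - z2)/(1 + z1*z2) = -((z1 + z2)/(1 + z1*z2)) by ring,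
      g_neg, g_neg]
  ring

lemma hfun_neg_right (ρ z1 z2 : ℝ) : hfun ρ z1 (-z2) = hfun ρ z1 z2 := by
  unfold hfun
  rw [show z1*(-z2) = -(z1*z2) by ring, show (1:ℝ) + -(z1*z2) = 1 - z1*z2 by ring,
      show (1:ℝ) - -(z1*z2) = 1 + z1*z2 by ring,
      show (z1 + -z2)/(1 - z1*z2) = -((z2 - z1)/(1 - z1*z2)) by ring,
      show (z1 - -z2)/(1 + z1*z2) = (z1 + z2)/(1 + z1*z2) by ring,
      g_neg,
      show (z2 - z1)/(1 - z1*z2) = -((z1 - z2)/(1 - z1*z2)) by ring, g_neg]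
  ring

lemma hfun_abs (ρ z1 z2 : ℝ) : hfun ρ |z1| |z2| = hfun ρ z1 z2 := by
  rcases abs_cases z1 with ⟨h1, _⟩ | ⟨h1, _⟩ <;> rcases abs_cases z2 with ⟨h2, _⟩ | ⟨h2, _⟩ <;>
    rw [h1, h2] <;> simp [hfun_neg_left, hfun_neg_right]

lemma hfun_pos {ρ : ℝ} (hρ : 0 ≤ ρ) {z1 z2 : ℝ} (h1 : 0 ≤ z1) (h1' : z1 ≤ 1)
    (h2 : 0 ≤ z2) (h2' : z2 ≤ 1) (hp : z1*z2 < 1) : 0 < hfun ρ z1 z2 := by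
  have hP : (0:ℝ) < 1 + z1*z2 := by nlinarith
  have hM : (0:ℝ) < 1 - z1*z2 := by linarith
  have hz : |(z1+z2)/(1+z1*z2)| ≤ 1 := by
    rw [abs_div, abs_of_pos hP, div_le_one hP, abs_of_nonneg (by linarith)]
    nlinarith
  have hw : |(z1-z2)/(1-z1*z2)| ≤ 1 := by
    rw [abs_div, abs_of_pos hM, div_le_one hM, abs_le]
    constructor <;> nlinarith
  have g1 := g_pos hρ hz
  have g2 := g_pos hρ hw
  unfold hfun
  have t1 : 0 < (1/2) * (1 + z1*z2) * g ρ ((z1 + z2)/(1 + z1*z2)) := by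
    apply mul_pos (by linarith) g1
  have t2 : 0 < (1/2) * (1 - z1*z2) * g ρ ((z1 - z2)/(1 - z1*z2)) := by
    apply mul_pos (by linarith) g2
  linarith

lemma pair_eq' {ρ : ℝ} (hρ : 0 ≤ ρ) {q1 q2 Δ1 Δ2 : ℝ}
    (hq1 : 0 ≤ q1) (hq2 : 0 ≤ q2) (hΔ1 : |Δ1| ≤ 1) (hΔ2 : |Δ2| ≤ 1)
    (hp : |Δ1 * Δ2| < 1) :
    ((1/2) * ((1/2) * (q1*(1+Δ1)) * (q2*(1+Δ2))) ^ (1/(1+ρ))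
       + (1/2) * ((1/2) * (q1*(1-Δ1)) * (q2*(1-Δ2))) ^ (1/(1+ρ))) ^ (1+ρ)
    + ((1/2) * ((1/2) * (q1*(1-Δ1)) * (q2*(1+Δ2))) ^ (1/(1+ρ))
       + (1/2) * ((1/2) * (q1*(1+Δ1)) * (q2*(1-Δ2))) ^ (1/(1+ρ))) ^ (1+ρ)
    = q1 * q2 * hfun ρ Δ1 Δ2 := by
  obtain ⟨hp1, hp2⟩ := abs_lt.mp hp
  have hP : (0:ℝ) < 1 + Δ1*Δ2 := by linarith
  have hM : (0:ℝ) < 1 - Δ1*Δ2 := by linarith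
  have hP' : (1:ℝ) + Δ1*Δ2 ≠ 0 := ne_of_gt hP
  have hM' : (1:ℝ) - Δ1*Δ2 ≠ 0 := ne_of_gt hM
  obtain ⟨h1a, h1b⟩ := abs_le.mp hΔ1
  obtain ⟨h2a, h2b⟩ := abs_le.mp hΔ2
  set z := (Δ1+Δ2)/(1+Δ1*Δ2) with hz
  set w := (Δ1-Δ2)/(1-Δ1*Δ2) with hw
  set w' := (Δ2-Δ1)/(1-Δ1*Δ2) with hw'
  have ez1 : 1 + z = (1+Δ1)*(1+Δ2)/(1+Δ1*Δ2) := by rw [hz]; field_simp; ring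
  have ez2 : 1 - z = (1-Δ1)*(1-Δ2)/(1+Δ1*Δ2) := by rw [hz]; field_simp; ring
  have ew1 : 1 + w' = (1-Δ1)*(1+Δ2)/(1-Δ1*Δ2) := by
    rw [hw', eq_div_iff hM', add_mul, div_mul_cancel₀ _ hM']; ring
  have ew2 : 1 - w' = (1+Δ1)*(1-Δ2)/(1-Δ1*Δ2) := by
    rw [hw', eq_div_iff hM', sub_mul, div_mul_cancel₀ _ hM']; ring
  have bz1 : 0 ≤ 1 + z := ez1 ▸ div_nonneg (mul_nonneg (by linarith) (by linarith)) hP.le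
  have bz2 : 0 ≤ 1 - z := ez2 ▸ div_nonneg (mul_nonneg (by linarith) (by linarith)) hP.le
  have bw1 : 0 ≤ 1 + w' := ew1 ▸ div_nonneg (mul_nonneg (by linarith) (by linarith)) hM.le
  have bw2 : 0 ≤ 1 - w' := ew2 ▸ div_nonneg (mul_nonneg (by linarith) (by linarith)) hM.le
  have hK1 : 0 ≤ (1/2) * (q1*q2) * (1 + Δ1*Δ2) := by positivity
  have hK2 : 0 ≤ (1/2) * (q1*q2) * (1 - Δ1*Δ2) := by
    have := mul_nonneg hq1 hq2; nlinarith
  have e1 : (1/2) * (q1*(1+Δ1)) * (q2*(1+Δ2)) = ((1/2) * (q1*q2) * (1 + Δ1*Δ2)) * (1 + z) := by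
    rw [ez1]; field_simp
  have e2 : (1/2) * (q1*(1-Δ1)) * (q2*(1-Δ2)) = ((1/2) * (q1*q2) * (1 + Δ1*Δ2)) * (1 - z) := by
    rw [ez2]; field_simp
  have e3 : (1/2) * (q1*(1-Δ1)) * (q2*(1+Δ2)) = ((1/2) * (q1*q2) * (1 - Δ1*Δ2)) * (1 + w') := by
    rw [ew1]; field_simp
  have e4 : (1/2) * (q1*(1+Δ1)) * (q2*(1-Δ2)) = ((1/2) * (q1*q2) * (1 - Δ1*Δ2)) * (1 - w') := by
    rw [ew2]; field_simp
  rw [e1, e2, e3, e4, term_eq hρ hK1 bz1 bz2, term_eq hρ hK2 bw1 bw2,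
      show w' = -w by rw [hw', hw]; ring, g_neg]
  unfold hfun
  rw [← hz, ← hw]
  ring

lemma chan_decomp {Y : Type*} (W : Bool → Y → ℝ) (y : Y) (h : 0 < W false y + W true y) :
    W false y = qW W y * (1 + ΔW W y) ∧ W true y = qW W y * (1 - ΔW W y) := by
  have h0 : W false y + W true y ≠ 0 := ne_of_gt h
  constructor <;> (unfold qW ΔW; field_simp; ring)

lemma abs_ΔW_le {Y : Type*} (W : Bool → Y → ℝ) (y : Y) (hnn : ∀ x, 0 ≤ W x y)
    (h : 0 < W false y + W true y) : |ΔW W y| ≤ 1 := by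
  unfold ΔW
  rw [abs_div, abs_of_pos h, div_le_one h, abs_le]
  have := hnn false; have := hnn true
  constructor <;> linarith

theorem E0_plus_repr {Y1 Y2 : Type*} [Fintype Y1] [Fintype Y2]
    (W1 : Bool → Y1 → ℝ) (W2 : Bool → Y2 → ℝ)
    (hW1_nonneg : ∀ x y, 0 ≤ W1 x y) (hW1_sum : ∀ x, ∑ y, W1 x y = 1)
    (hW1_pos : ∀ y, 0 < W1 false y + W1 true y)
    (hW2_nonneg : ∀ x y, 0 ≤ W2 x y) (hW2_sum : ∀ x, ∑ y, W2 x y = 1)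
    (hW2_pos : ∀ y, 0 < W2 false y + W2 true y)
    (hΔ : ∀ y1 y2, |ΔW W1 y1 * ΔW W2 y2| < 1)
    (ρ : ℝ) (hρ : 0 ≤ ρ) :
    Real.exp (-(E0 ρ (Wplus W1 W2))) =
      ∑ y1, ∑ y2, qW W1 y1 * qW W2 y2 * hfun ρ |ΔW W1 y1| |ΔW W2 y2| := by
  have key : ∀ (y1 : Y1) (y2 : Y2),
      (∑ u : Bool, ((1/2) * (Wplus W1 W2 false (y1, y2, u)) ^ (1/(1+ρ))
          + (1/2) * (Wplus W1 W2 true (y1, y2, u)) ^ (1/(1+ρ))) ^ (1+ρ))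
      = qW W1 y1 * qW W2 y2 * hfun ρ |ΔW W1 y1| |ΔW W2 y2| := by
    intro y1 y2
    obtain ⟨ea, eb⟩ := chan_decomp W1 y1 (hW1_pos y1)
    obtain ⟨ec, ed⟩ := chan_decomp W2 y2 (hW2_pos y2)
    have hq1 : 0 ≤ qW W1 y1 := by unfold qW; linarith [hW1_pos y1]
    have hq2 : 0 ≤ qW W2 y2 := by unfold qW; linarith [hW2_pos y2]
    have hΔ1 := abs_ΔW_le W1 y1 (fun x => hW1_nonneg x y1) (hW1_pos y1)
    have hΔ2 := abs_ΔW_le W2 y2 (fun x => hW2_nonneg x y2) (hW2_pos y2)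
    rw [Fintype.sum_bool]
    simp only [Wplus]
    simp only [Bool.xor_false, Bool.xor_true, Bool.not_true, Bool.not_false]
    rw [ea, eb, ec, ed, hfun_abs]
    have := pair_eq' hρ hq1 hq2 hΔ1 hΔ2 (hΔ y1 y2)
    linarith
  have hS : (∑ y : Y1 × Y2 × Bool,
      ((1/2) * (Wplus W1 W2 false y) ^ (1/(1+ρ))
        + (1/2) * (Wplus W1 W2 true y) ^ (1/(1+ρ))) ^ (1+ρ))
      = ∑ y1, ∑ y2, qW W1 y1 * qW W2 y2 * hfun ρ |ΔW W1 y1| |ΔW W2 y2| := by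
    rw [Fintype.sum_prod_type]
    refine Finset.sum_congr rfl fun y1 _ => ?_
    rw [Fintype.sum_prod_type]
    exact Finset.sum_congr rfl fun y2 _ => key y1 y2
  have hne1 : (Finset.univ : Finset Y1).Nonempty :=
    Finset.nonempty_of_sum_ne_zero (by rw [hW1_sum false]; exact one_ne_zero)
  have hne2 : (Finset.univ : Finset Y2).Nonempty :=
    Finset.nonempty_of_sum_ne_zero (by rw [hW2_sum false]; exact one_ne_zero)
  have hpos : 0 < ∑ y1, ∑ y2, qW W1 y1 * qW W2 y2 * hfun ρ |ΔW W1 y1| |ΔW W2 y2| := by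
    refine Finset.sum_pos (fun y1 _ => Finset.sum_pos (fun y2 _ => ?_) hne2) hne1
    have hq1 : 0 < qW W1 y1 := by unfold qW; linarith [hW1_pos y1]
    have hq2 : 0 < qW W2 y2 := by unfold qW; linarith [hW2_pos y2]
    refine mul_pos (mul_pos hq1 hq2) (hfun_pos hρ (abs_nonneg _) ?_ (abs_nonneg _) ?_ ?_)
    · exact abs_ΔW_le W1 y1 (fun x => hW1_nonneg x y1) (hW1_pos y1)
    · exact abs_ΔW_le W2 y2 (fun x => hW2_nonneg x y2) (hW2_pos y2)
    · rw [← abs_mul]; exact hΔ y1 y2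
  unfold E0
  rw [neg_neg, Real.exp_log (by rw [hS]; exact hpos), hS]
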